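/- In every n-dimensional normed space (n ≥ 2) over ℝ or ℂ there exist n unit vectors that are pairwise mutually Birkhoff–James orthogonal, i.e., unit vectors y₁,…,y_n with y_i ⊥ y_j for all i ≠ j. These vectors can be chosen as maximizers of |det(x₁,…,x_n)| over n-tuples of unit vectors. -/

import Mathlib

theorem stmt_15 {𝕜 X : Type*} [RCLike 𝕜] [NormedAddCommGroup X] [NormedSpace 𝕜 X]
    {n : ℕ} (hn : 2 ≤ n) [FiniteDimensional 𝕜 X] (hdim : Module.finrank 𝕜 X = n)
    (b : Module.Basis (Fin n) 𝕜 X) :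
    ∃ y : Fin n → X, (∀ i, ‖y i‖ = 1) ∧
      (∀ x : Fin n → X, (∀ i, ‖x i‖ = 1) → ‖b.det x‖ ≤ ‖b.det y‖) ∧
      (∀ i j, i ≠ j → ∀ l : 𝕜, ‖y i + l • y j‖ ≥ ‖y i‖) := by
  haveI : ProperSpace X := FiniteDimensional.proper_rclike 𝕜 X
  -- the set of unit-vector tuples
  set S : Set (Fin n → X) := Set.pi Set.univ (fun _ => Metric.sphere (0 : X) 1) with hS
  have hmemS : ∀ x : Fin n → X, x ∈ S ↔ ∀ i, ‖x i‖ = 1 := by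
    intro x
    simp [hS, Set.mem_pi, mem_sphere_iff_norm]
  have hScompact : IsCompact S := isCompact_univ_pi fun _ => isCompact_sphere 0 1
  -- a distinguished unit tuple with nonzero determinant
  set x₀ : Fin n → X := fun i => ((‖b i‖ : 𝕜))⁻¹ • b i with hx₀
  have hbne : ∀ i, b i ≠ 0 := fun i => b.ne_zero i
  have hbnorm : ∀ i, (0:ℝ) < ‖b i‖ := fun i => norm_pos_iff.2 (hbne i)
  have hx₀S : x₀ ∈ S := by
    rw [hmemS]
    intro i
    rw [hx₀]
    simp only [norm_smul, norm_inv, RCLike.norm_ofReal, abs_of_pos (hbnorm i)]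
    exact inv_mul_cancel₀ (ne_of_gt (hbnorm i))
  have hx₀det : b.det x₀ ≠ 0 := by
    have : b.det x₀ = (∏ i, ((‖b i‖ : 𝕜))⁻¹) • b.det (fun i => b i) := by
      rw [hx₀]
      exact b.det.toMultilinearMap.map_smul_univ _ _
    rw [this]
    simp only [smul_eq_mul]
    have h1 : b.det (fun i => b i) = 1 := by
      simpa using b.det_self
    rw [h1, mul_one]
    refine Finset.prod_ne_zero_iff.2 fun i _ => ?_
    simp only [ne_eq, inv_eq_zero, RCLike.ofReal_eq_zero]
    exact ne_of_gt (hbnorm i)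
  -- continuity of the determinant function
  have hcont : Continuous fun x : Fin n → X => ‖b.det x‖ := by
    have h1 : Continuous fun x : Fin n → X => Matrix.det (Matrix.of fun i j => b.coord i (x j)) := by
      refine Continuous.matrix_det ?_
      refine continuous_pi fun i => continuous_pi fun j => ?_
      exact (b.coord i).continuous_of_finiteDimensional.comp (continuous_apply j)
    have h2 : ∀ x : Fin n → X, b.det x = Matrix.det (Matrix.of fun i j => b.coord i (x j)) := by
      intro x
      rw [Module.Basis.det_apply]
      rfl
    simpa only [h2] using h1.norm
  -- existence of a maximizer
  obtain ⟨y, hyS, hymax⟩ := hScompact.exists_isMaxOn ⟨x₀, hx₀S⟩ hcont.continuousOn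
  have hyunit : ∀ i, ‖y i‖ = 1 := (hmemS y).1 hyS
  have hmax : ∀ x : Fin n → X, (∀ i, ‖x i‖ = 1) → ‖b.det x‖ ≤ ‖b.det y‖ :=
    fun x hx => hymax ((hmemS x).2 hx)
  have hydet : b.det y ≠ 0 := by
    intro h
    have := hmax x₀ ((hmemS x₀).1 hx₀S)
    rw [h, norm_zero] at this
    exact hx₀det (norm_le_zero_iff.1 this)
  refine ⟨y, hyunit, hmax, ?_⟩
  intro i j hij l
  -- key determinant identity
  have hkey : b.det (Function.update y i (y i + l • y j)) = b.det y := by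
    rw [b.det.map_update_add, b.det.map_update_smul, Function.update_eq_self]
    have hz : b.det (Function.update y i (y j)) = 0 := by
      refine b.det.map_eq_zero_of_eq _ ?_ hij
      rw [Function.update_self, Function.update_of_ne (Ne.symm hij)]
    rw [hz, smul_zero, add_zero]
  set c : ℝ := ‖y i + l • y j‖ with hc
  rcases eq_or_lt_of_le (norm_nonneg (y i + l • y j)) with h0 | hcpos
  · -- y i + l • y j = 0 is impossible
    exfalso
    have hz : y i + l • y j = 0 := by
      rw [← norm_le_zero_iff, ← h0]
    rw [hz] at hkey
    have : b.det (Function.update y i (0 : X)) = 0 := b.det.map_update_zero _ _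
    exact hydet (hkey ▸ this)
  · -- normalize and compare
    set z : X := ((c : 𝕜))⁻¹ • (y i + l • y j) with hz
    have hcne : (c : 𝕜) ≠ 0 := by
      simp only [ne_eq, RCLike.ofReal_eq_zero]
      exact ne_of_gt hcpos
    have hxS : ∀ k, ‖Function.update y i z k‖ = 1 := by
      intro k
      rcases eq_or_ne k i with rfl | hk
      · rw [Function.update_self, hz]
        rw [norm_smul, norm_inv, RCLike.norm_ofReal, abs_of_pos hcpos, ← hc]
        field_simp
        exact div_self (ne_of_gt hcpos)
      · rw [Function.update_of_ne hk]
        exact hyunit k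
    have hdetx : b.det (Function.update y i z) = ((c : 𝕜))⁻¹ • b.det y := by
      rw [hz, b.det.map_update_smul, hkey]
    have hle := hmax _ hxS
    rw [hdetx, norm_smul, norm_inv, RCLike.norm_ofReal, abs_of_pos hcpos] at hle
    have hdetpos : 0 < ‖b.det y‖ := norm_pos_iff.2 hydet
    have hcinv : c⁻¹ ≤ 1 := by
      by_contra hlt
      push_neg at hlt
      nlinarith
    have : 1 ≤ c := by
      nlinarith [mul_le_mul_of_nonneg_left hcinv (le_of_lt hcpos), mul_inv_cancel₀ (ne_of_gt hcpos)]
    rw [hyunit i]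
    exact this
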